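/- arXiv:2511.00017 — 2 statements merged into one kernel-verified Lean document; each statement's English description precedes it below -/
import Mathlib

section
/- Let T₀ > 0 and k ≥ 0 be fixed real numbers. Then lim_{λ→∞} (1 - (2/π)·arctan(k/(λT₀)))^{(π/2)λ} = exp(-k/T₀). -/
open Filter Real Topology

/-- For fixed `T₀ > 0` and `k ≥ 0`,
`(1 - (2/π)·arctan(k/(λT₀)))^((π/2)λ) → exp(-k/T₀)` as `λ → ∞`. -/
theorem arctan_power_tendsto_exp (T0 k : ℝ) (hT0 : 0 < T0) (hk : 0 ≤ k) :
    Tendsto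
      (fun lam : ℝ =>
        (1 - (2 / Real.pi) * Real.arctan (k / (lam * T0))) ^ ((Real.pi / 2) * lam))
      atTop (nhds (Real.exp (-k / T0))) := by
  have hπ := Real.pi_pos
  have h2π : 0 < 2 / Real.pi := by positivity
  have hbase : ∀ lam : ℝ, 0 < 1 - (2 / Real.pi) * Real.arctan (k / (lam * T0)) := by
    intro lam
    have h1 : (2 / Real.pi) * Real.arctan (k / (lam * T0)) < (2 / Real.pi) * (Real.pi / 2) :=
      mul_lt_mul_of_pos_left (Real.arctan_lt_pi_div_two _) h2π
    have h2 : (2 / Real.pi) * (Real.pi / 2) = 1 := by field_simp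
    linarith
  rcases eq_or_lt_of_le hk with hk0 | hkpos
  · simp [← hk0, Real.arctan_zero, Real.one_rpow]
  · -- k > 0
    have hx0 : Tendsto (fun lam : ℝ => k / (lam * T0)) atTop (𝓝 0) :=
      tendsto_const_nhds.div_atTop (Tendsto.atTop_mul_const hT0 tendsto_id)
    have hxpos : ∀ᶠ lam : ℝ in atTop, 0 < k / (lam * T0) := by
      filter_upwards [eventually_gt_atTop 0] with lam hlam
      positivity
    have hx0' : Tendsto (fun lam : ℝ => k / (lam * T0)) atTop (𝓝[≠] 0) := by
      rw [tendsto_nhdsWithin_iff]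
      exact ⟨hx0, hxpos.mono fun lam h => ne_of_gt h⟩
    have hA0 : Tendsto (fun lam : ℝ => Real.arctan (k / (lam * T0))) atTop (𝓝 0) := by
      have := (Real.continuous_arctan.tendsto 0).comp hx0
      simpa [Function.comp_def] using this
    -- slope of arctan at 0 tends to 1
    have hslopeA : Tendsto (slope Real.arctan 0) (𝓝[≠] 0) (𝓝 1) := by
      have := hasDerivAt_iff_tendsto_slope.mp (Real.hasDerivAt_arctan 0)
      simpa using this
    -- base tends to 1 within ≠ 1
    have hbase1 : Tendsto (fun lam : ℝ =>
        1 - (2 / Real.pi) * Real.arctan (k / (lam * T0))) atTop (𝓝[≠] 1) := by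
      rw [tendsto_nhdsWithin_iff]
      constructor
      · have : Tendsto (fun lam : ℝ =>
            1 - (2 / Real.pi) * Real.arctan (k / (lam * T0))) atTop (𝓝 (1 - (2/Real.pi) * 0)) :=
          tendsto_const_nhds.sub (tendsto_const_nhds.mul hA0)
        simpa using this
      · filter_upwards [hxpos] with lam hlam
        have hApos : 0 < Real.arctan (k / (lam * T0)) := by simpa using Real.arctan_strictMono hlam
        have : 0 < (2 / Real.pi) * Real.arctan (k / (lam * T0)) := by positivity
        simp only [Set.mem_compl_iff, Set.mem_singleton_iff]
        intro h
        nlinarith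
    have hslopeL : Tendsto (slope Real.log 1) (𝓝[≠] 1) (𝓝 1) := by
      have := hasDerivAt_iff_tendsto_slope.mp (Real.hasDerivAt_log one_ne_zero)
      simpa using this
    -- the exponent limit
    have hexp : Tendsto (fun lam : ℝ =>
        Real.log (1 - (2 / Real.pi) * Real.arctan (k / (lam * T0))) * ((Real.pi / 2) * lam))
        atTop (𝓝 (-(k / T0))) := by
      have hg : Tendsto (fun lam : ℝ =>
          slope Real.log 1 (1 - (2 / Real.pi) * Real.arctan (k / (lam * T0))) *
            (-(k / T0) * slope Real.arctan 0 (k / (lam * T0)))) atTop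
          (𝓝 (1 * (-(k / T0) * 1))) :=
        (hslopeL.comp hbase1).mul (tendsto_const_nhds.mul (hslopeA.comp hx0'))
      rw [one_mul, mul_one] at hg
      refine hg.congr' ?_
      filter_upwards [hxpos] with lam hlam
      have hx : k / (lam * T0) ≠ 0 := ne_of_gt hlam
      have hA : Real.arctan (k / (lam * T0)) ≠ 0 := ne_of_gt (by simpa using Real.arctan_strictMono hlam)
      have hlampos : 0 < lam := by
        by_contra h
        push_neg at h
        have : lam * T0 ≤ 0 := mul_nonpos_of_nonpos_of_nonneg h hT0.le
        have := div_nonpos_of_nonneg_of_nonpos hkpos.le this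
        linarith
      rw [slope_def_field, slope_def_field]
      simp only [Real.log_one, Real.arctan_zero, sub_zero]
      field_simp
      ring
    -- rewrite rpow as exp
    have heq : (fun lam : ℝ =>
        (1 - (2 / Real.pi) * Real.arctan (k / (lam * T0))) ^ ((Real.pi / 2) * lam)) =
        fun lam : ℝ => Real.exp
          (Real.log (1 - (2 / Real.pi) * Real.arctan (k / (lam * T0))) * ((Real.pi / 2) * lam)) := by
      funext lam
      exact Real.rpow_def_of_pos (hbase lam) _
    rw [heq, show -k / T0 = -(k / T0) by ring]
    exact (Real.continuous_exp.tendsto _).comp hexp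
end

section
/- Let α > 0, λ > 0 and T₀ > 0. Then ∫_{ℝ²} ω_{α,λ}(ξx,ξy) dξx dξy = π²·λ·T₀ / (2(α+1)), where ω_{α,λ}(ξx,ξy) = (1 - (2/π)·arctan(χ))^α / (1 + χ²) with χ = (ξx² + ξy²)/(λT₀). -/
open MeasureTheory Real Set

/-- Total mass of the ATGJ weight function:
`∫_{ℝ²} ω_{α,λ} = π²λT₀ / (2(α+1))`. -/
theorem atgj_weight_integral (α lam T0 : ℝ) (hα : 0 < α) (hlam : 0 < lam) (hT0 : 0 < T0) :
    ∫ p : ℝ × ℝ,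
        (1 - (2 / Real.pi) * Real.arctan ((p.1 ^ 2 + p.2 ^ 2) / (lam * T0))) ^ α
          / (1 + ((p.1 ^ 2 + p.2 ^ 2) / (lam * T0)) ^ 2)
      = Real.pi ^ 2 * lam * T0 / (2 * (α + 1)) := by
  set c := lam * T0 with hc
  have hcpos : 0 < c := mul_pos hlam hT0
  rw [← integral_comp_polarCoord_symm]
  have heq : ∀ p : ℝ × ℝ,
      p.1 • ((1 - (2 / Real.pi) * Real.arctan (((polarCoord.symm p).1 ^ 2 + (polarCoord.symm p).2 ^ 2) / c)) ^ α
        / (1 + (((polarCoord.symm p).1 ^ 2 + (polarCoord.symm p).2 ^ 2) / c) ^ 2))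
      = (fun r : ℝ => r * ((1 - (2 / Real.pi) * Real.arctan (r ^ 2 / c)) ^ α
        / (1 + (r ^ 2 / c) ^ 2))) p.1 * (fun _ : ℝ => (1:ℝ)) p.2 := by
    intro p
    have hsymm : polarCoord.symm p = (p.1 * Real.cos p.2, p.1 * Real.sin p.2) := rfl
    have : (polarCoord.symm p).1 ^ 2 + (polarCoord.symm p).2 ^ 2 = p.1 ^ 2 := by
      rw [hsymm]; simp only [mul_pow]; rw [← mul_add, Real.cos_sq_add_sin_sq, mul_one]
    rw [this]
    simp [smul_eq_mul]
  simp_rw [heq]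
  have htarget : polarCoord.target = Set.Ioi (0:ℝ) ×ˢ Set.Ioo (-π) π := rfl
  rw [htarget, Measure.volume_eq_prod, ← Measure.prod_restrict, MeasureTheory.integral_prod_mul (f := fun r : ℝ => r * ((1 - (2 / Real.pi) * Real.arctan (r ^ 2 / c)) ^ α / (1 + (r ^ 2 / c) ^ 2))) (g := fun _ : ℝ => (1:ℝ))]
  rw [MeasureTheory.integral_const, measureReal_def, Measure.restrict_apply_univ, Real.volume_Ioo]
  have h2pi : (π - (-π)) = 2 * π := by ring
  rw [h2pi, ENNReal.toReal_ofReal (by positivity : (0:ℝ) ≤ 2*π)]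
  -- now the radial integral
  have hkey : ∫ r in Set.Ioi (0:ℝ),
      r * ((1 - (2 / Real.pi) * Real.arctan (r ^ 2 / c)) ^ α / (1 + (r ^ 2 / c) ^ 2))
      = π * c / (4 * (α + 1)) := by
    set F : ℝ → ℝ := fun r => -(π * c / (4 * (α + 1))) *
      (1 - (2 / Real.pi) * Real.arctan (r ^ 2 / c)) ^ (α + 1) with hF
    have hbase : ∀ r : ℝ, 0 < 1 - (2 / Real.pi) * Real.arctan (r ^ 2 / c) := by
      intro r
      have h1 : Real.arctan (r ^ 2 / c) < π / 2 := Real.arctan_lt_pi_div_two _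
      have hπ : 0 < π := Real.pi_pos
      have h2 : (2 / π) * Real.arctan (r ^ 2 / c) < (2 / π) * (π / 2) :=
        mul_lt_mul_of_pos_left h1 (by positivity)
      have h3 : (2 / π) * (π / 2) = 1 := by field_simp
      rw [h3] at h2
      linarith
    have hderiv : ∀ r ∈ Set.Ioi (0:ℝ), HasDerivAt F
        (r * ((1 - (2 / Real.pi) * Real.arctan (r ^ 2 / c)) ^ α / (1 + (r ^ 2 / c) ^ 2))) r := by
      intro r _
      have h1 : HasDerivAt (fun r : ℝ => r ^ 2 / c) (2 * r / c) r := by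
        simpa using ((hasDerivAt_pow 2 r).div_const c)
      have h2 : HasDerivAt (fun r : ℝ => Real.arctan (r ^ 2 / c))
          (1 / (1 + (r ^ 2 / c) ^ 2) * (2 * r / c)) r := by
        have := (Real.hasDerivAt_arctan (r ^ 2 / c)).comp r h1; exact this
      have h3 : HasDerivAt (fun r : ℝ => 1 - (2 / Real.pi) * Real.arctan (r ^ 2 / c))
          (-((2 / Real.pi) * (1 / (1 + (r ^ 2 / c) ^ 2) * (2 * r / c)))) r := by
        simpa using ((h2.const_mul (2 / Real.pi)).const_sub 1)
      have h4 := (h3.rpow_const (p := α + 1) (Or.inl (hbase r).ne'))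
      have h5 := h4.const_mul (-(π * c / (4 * (α + 1))))
      refine h5.congr_deriv (Eq.symm ?_)
      have hα1 : α + 1 - 1 = α := by ring
      rw [hα1]
      have hπ : (π : ℝ) ≠ 0 := Real.pi_ne_zero
      have hd : (0:ℝ) < 1 + (r ^ 2 / c) ^ 2 := by positivity
      field_simp
      ring
    have hcont : ContinuousWithinAt F (Set.Ici 0) 0 := by
      apply ContinuousAt.continuousWithinAt
      have : Continuous F := by
        apply Continuous.mul continuous_const
        apply Continuous.rpow_const
        · exact (continuous_const.sub (continuous_const.mul
            (Real.continuous_arctan.comp ((continuous_pow 2).div_const c))))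
        · intro x; exact Or.inl (hbase x).ne'
      exact this.continuousAt
    have hnonneg : ∀ r ∈ Set.Ioi (0:ℝ),
        0 ≤ r * ((1 - (2 / Real.pi) * Real.arctan (r ^ 2 / c)) ^ α / (1 + (r ^ 2 / c) ^ 2)) := by
      intro r hr
      have h1 := (hbase r).le
      have hd : (0:ℝ) < 1 + (r ^ 2 / c) ^ 2 := by positivity
      have h2 := Real.rpow_nonneg h1 α
      exact mul_nonneg (le_of_lt (Set.mem_Ioi.mp hr)) (div_nonneg h2 hd.le)
    have htend : Filter.Tendsto F Filter.atTop (nhds 0) := by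
      have h1 : Filter.Tendsto (fun r : ℝ => r ^ 2 / c) Filter.atTop Filter.atTop :=
        (Filter.tendsto_pow_atTop (by norm_num)).atTop_div_const hcpos
      have h2 : Filter.Tendsto (fun r : ℝ => 1 - (2 / Real.pi) * Real.arctan (r ^ 2 / c))
          Filter.atTop (nhds 0) := by
        have ha := (Real.tendsto_arctan_atTop.mono_right nhdsWithin_le_nhds).comp h1
        have h3 : Filter.Tendsto (fun r : ℝ => (2 / Real.pi) * Real.arctan (r ^ 2 / c))
            Filter.atTop (nhds ((2 / Real.pi) * (π / 2))) := ha.const_mul _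
        have hval : (2 / Real.pi) * (π / 2) = 1 := by field_simp
        rw [hval] at h3
        have h2' : Filter.Tendsto (fun r : ℝ => 1 - (2 / Real.pi) * Real.arctan (r ^ 2 / c))
            Filter.atTop (nhds (1 - 1)) := tendsto_const_nhds.sub h3
        rwa [sub_self] at h2'
      have h4 : Filter.Tendsto (fun r : ℝ =>
          (1 - (2 / Real.pi) * Real.arctan (r ^ 2 / c)) ^ (α + 1)) Filter.atTop (nhds 0) := by
        have := h2.rpow_const (p := α + 1) (Or.inr (by linarith))
        simpa [Real.zero_rpow (by linarith : α + 1 ≠ 0)] using this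
      have h5 := h4.const_mul (-(π * c / (4 * (α + 1))))
      rw [hF]
      simpa using h5
    have := MeasureTheory.integral_Ioi_of_hasDerivAt_of_nonneg hcont hderiv hnonneg htend
    rw [this, hF]
    simp only [ne_eq]
    rw [show ((0:ℝ) ^ 2 / c) = 0 by simp, Real.arctan_zero, mul_zero, sub_zero,
      Real.one_rpow]
    ring
  rw [hkey]
  have hα1 : α + 1 ≠ 0 := by linarith
  field_simp
  ring
end
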